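/- Let A be an anticommutative algebra over a field F of characteristic zero, G a torsion-free abelian group with nontrivial elements, λ a symmetric 2-cocycle, and consider the full extension L̂(A) = (A ⊗ F^t[G]) ⊕ V ⊕ V* with V = G ⊗_Z F central, V*V* = 0, and d·(x⊗t^σ) = d(σ) x⊗t^σ = -(x⊗t^σ)·d for d ∈ V*. If A has a symmetric invariant form, then L̂(A) is a Malcev algebra if and only if A is a Lie algebra (i.e. J(x,y,z) = 0 for all x,y,z), in which case L̂(A) is a Lie algebra. -/

import Mathlib

open TensorProduct

/-- The Jacobian. -/
def jac {A : Type*} [NonUnitalNonAssocRing A] (x y z : A) : A :=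
  (x * y) * z + (z * x) * y + (y * z) * x

/-- The loop algebra product on `A ⊗ F^t[G] ≅ (G →₀ A)`. -/
noncomputable def conv {F G A : Type*} [Field F] [AddCommGroup G]
    [NonUnitalNonAssocRing A] [Module F A]
    (l : G → G → F) (f g : G →₀ A) : G →₀ A :=
  f.sum fun σ x => g.sum fun τ y => Finsupp.single (σ + τ) (l σ τ • (x * y))

/-- The central term `Σ δ_{σ,-τ} λ(σ,τ)(x,y) σ` with values in `V = G ⊗_ℤ F`
(realized as `F ⊗[ℤ] G`, with `σ` identified with `1 ⊗ σ`). -/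
noncomputable def centralTerm {F G A : Type*} [Field F] [AddCommGroup G] [DecidableEq G]
    [NonUnitalNonAssocRing A] [Module F A]
    (l : G → G → F) (B : A →ₗ[F] A →ₗ[F] F) (f g : G →₀ A) : F ⊗[ℤ] G :=
  f.sum fun σ x => g.sum fun τ y =>
    if σ + τ = 0 then (l σ τ * B x y) • ((1 : F) ⊗ₜ[ℤ] σ) else 0

/-- The action of a derivation `d ∈ V*` on the loop algebra:
`d · (x ⊗ t^σ) = d(σ) x ⊗ t^σ`. -/
noncomputable def dAct {F G A : Type*} [Field F] [AddCommGroup G]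
    [NonUnitalNonAssocRing A] [Module F A]
    (d : (F ⊗[ℤ] G) →ₗ[F] F) (g : G →₀ A) : G →₀ A :=
  g.sum fun σ y => Finsupp.single σ (d ((1 : F) ⊗ₜ[ℤ] σ) • y)

/-- The product on the full extension `L̂(A) = (A ⊗ F^t[G]) ⊕ V ⊕ V*`, where `V` is
central, `V*V* = 0` and `d·(x⊗t^σ) = d(σ) x⊗t^σ = -(x⊗t^σ)·d` for `d ∈ V*`. -/
noncomputable def hmul {F G A : Type*} [Field F] [AddCommGroup G] [DecidableEq G]
    [NonUnitalNonAssocRing A] [Module F A]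
    (l : G → G → F) (B : A →ₗ[F] A →ₗ[F] F)
    (p q : (G →₀ A) × (F ⊗[ℤ] G) × ((F ⊗[ℤ] G) →ₗ[F] F)) :
    (G →₀ A) × (F ⊗[ℤ] G) × ((F ⊗[ℤ] G) →ₗ[F] F) :=
  (conv l p.1 q.1 + dAct p.2.2 q.1 - dAct q.2.2 p.1, centralTerm l B p.1 q.1, 0)

/-- The Jacobian with respect to the product of `L̂(A)`. -/
noncomputable def hjac {F G A : Type*} [Field F] [AddCommGroup G] [DecidableEq G]
    [NonUnitalNonAssocRing A] [Module F A]
    (l : G → G → F) (B : A →ₗ[F] A →ₗ[F] F)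
    (X Y Z : (G →₀ A) × (F ⊗[ℤ] G) × ((F ⊗[ℤ] G) →ₗ[F] F)) :
    (G →₀ A) × (F ⊗[ℤ] G) × ((F ⊗[ℤ] G) →ₗ[F] F) :=
  hmul l B (hmul l B X Y) Z + hmul l B (hmul l B Z X) Y + hmul l B (hmul l B Y Z) X

set_option linter.unusedSectionVars false
set_option maxHeartbeats 1000000

section
variable {F G A : Type*} [Field F] [AddCommGroup G] [DecidableEq G]
  [NonUnitalNonAssocRing A] [Module F A]
variable (l : G → G → F) (B : A →ₗ[F] A →ₗ[F] F) (d : (F ⊗[ℤ] G) →ₗ[F] F)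

lemma conv_single (σ τ : G) (x y : A) :
    conv l (Finsupp.single σ x) (Finsupp.single τ y)
      = Finsupp.single (σ + τ) (l σ τ • (x * y)) := by
  unfold conv
  rw [Finsupp.sum_single_index (by simp), Finsupp.sum_single_index (by simp)]

lemma conv_zero_left (g : G →₀ A) : conv l 0 g = 0 := Finsupp.sum_zero_index

lemma conv_zero_right (f : G →₀ A) : conv l f 0 = 0 := by unfold conv; simp

lemma conv_add_left (f₁ f₂ g : G →₀ A) :
    conv l (f₁ + f₂) g = conv l f₁ g + conv l f₂ g := by
  unfold conv
  apply Finsupp.sum_add_index' <;>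
    simp [add_mul, smul_add, Finsupp.single_add, Finsupp.sum_add]

lemma conv_add_right (f g₁ g₂ : G →₀ A) :
    conv l f (g₁ + g₂) = conv l f g₁ + conv l f g₂ := by
  unfold conv
  rw [← Finsupp.sum_add]
  apply Finsupp.sum_congr
  intro σ _
  apply Finsupp.sum_add_index' <;> simp [mul_add, smul_add, Finsupp.single_add]

lemma conv_neg_left (f g : G →₀ A) : conv l (-f) g = -conv l f g := by
  have h := conv_add_left l (-f) f g
  rw [neg_add_cancel, conv_zero_left] at h
  exact eq_neg_of_add_eq_zero_left h.symm

lemma conv_neg_right (f g : G →₀ A) : conv l f (-g) = -conv l f g := by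
  have h := conv_add_right l f (-g) g
  rw [neg_add_cancel, conv_zero_right] at h
  exact eq_neg_of_add_eq_zero_left h.symm

lemma conv_sub_left (f₁ f₂ g : G →₀ A) :
    conv l (f₁ - f₂) g = conv l f₁ g - conv l f₂ g := by
  rw [sub_eq_add_neg, conv_add_left, conv_neg_left, sub_eq_add_neg]

lemma conv_sub_right (f g₁ g₂ : G →₀ A) :
    conv l f (g₁ - g₂) = conv l f g₁ - conv l f g₂ := by
  rw [sub_eq_add_neg, conv_add_right, conv_neg_right, sub_eq_add_neg]

lemma dAct_single (σ : G) (y : A) :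
    dAct d (Finsupp.single σ y) = Finsupp.single σ (d ((1 : F) ⊗ₜ[ℤ] σ) • y) := by
  unfold dAct
  rw [Finsupp.sum_single_index (by simp)]

lemma dAct_zero : dAct d (0 : G →₀ A) = 0 := Finsupp.sum_zero_index

lemma dAct_zero_fun (g : G →₀ A) : dAct (0 : (F ⊗[ℤ] G) →ₗ[F] F) g = 0 := by
  unfold dAct; simp

lemma dAct_add (g₁ g₂ : G →₀ A) : dAct d (g₁ + g₂) = dAct d g₁ + dAct d g₂ := by
  unfold dAct
  apply Finsupp.sum_add_index' <;> simp [smul_add, Finsupp.single_add]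

lemma dAct_neg (g : G →₀ A) : dAct d (-g) = -dAct d g := by
  have h := dAct_add d (-g) g
  rw [neg_add_cancel, dAct_zero] at h
  exact eq_neg_of_add_eq_zero_left h.symm

lemma dAct_sub (g₁ g₂ : G →₀ A) : dAct d (g₁ - g₂) = dAct d g₁ - dAct d g₂ := by
  rw [sub_eq_add_neg, dAct_add, dAct_neg, sub_eq_add_neg]

lemma CT_single (σ τ : G) (x y : A) :
    centralTerm l B (Finsupp.single σ x) (Finsupp.single τ y)
      = if σ + τ = 0 then (l σ τ * B x y) • ((1 : F) ⊗ₜ[ℤ] σ) else 0 := by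
  unfold centralTerm
  rw [Finsupp.sum_single_index (by simp), Finsupp.sum_single_index (by simp)]

lemma CT_zero_left (g : G →₀ A) : centralTerm l B 0 g = 0 := Finsupp.sum_zero_index

lemma CT_zero_right (f : G →₀ A) : centralTerm l B f 0 = 0 := by
  unfold centralTerm; simp

lemma CT_add_left (f₁ f₂ g : G →₀ A) :
    centralTerm l B (f₁ + f₂) g = centralTerm l B f₁ g + centralTerm l B f₂ g := by
  unfold centralTerm
  apply Finsupp.sum_add_index'
  · intro a; simp
  · intro a b₁ b₂
    rw [← Finsupp.sum_add]
    apply Finsupp.sum_congr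
    intro τ _
    simp only [map_add, LinearMap.add_apply, mul_add, add_smul]
    split <;> simp

lemma CT_add_right (f g₁ g₂ : G →₀ A) :
    centralTerm l B f (g₁ + g₂) = centralTerm l B f g₁ + centralTerm l B f g₂ := by
  unfold centralTerm
  rw [← Finsupp.sum_add]
  apply Finsupp.sum_congr
  intro σ _
  apply Finsupp.sum_add_index'
  · intro a; simp
  · intro a b₁ b₂
    simp only [map_add, mul_add, add_smul]
    split <;> simp

lemma CT_neg_left (f g : G →₀ A) : centralTerm l B (-f) g = -centralTerm l B f g := by
  have h := CT_add_left l B (-f) f g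
  rw [neg_add_cancel, CT_zero_left] at h
  exact eq_neg_of_add_eq_zero_left h.symm

lemma CT_neg_right (f g : G →₀ A) : centralTerm l B f (-g) = -centralTerm l B f g := by
  have h := CT_add_right l B f (-g) g
  rw [neg_add_cancel, CT_zero_right] at h
  exact eq_neg_of_add_eq_zero_left h.symm

lemma CT_sub_left (f₁ f₂ g : G →₀ A) :
    centralTerm l B (f₁ - f₂) g = centralTerm l B f₁ g - centralTerm l B f₂ g := by
  rw [sub_eq_add_neg, CT_add_left, CT_neg_left, sub_eq_add_neg]

lemma CT_sub_right (f g₁ g₂ : G →₀ A) :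
    centralTerm l B f (g₁ - g₂) = centralTerm l B f g₁ - centralTerm l B f g₂ := by
  rw [sub_eq_add_neg, CT_add_right, CT_neg_right, sub_eq_add_neg]


variable {l} {B}

section Anti
variable (hanti : ∀ x y : A, x * y = -(y * x))
  (hsymm : ∀ x y : A, B x y = B y x)
  (hlsymm : ∀ σ τ : G, l σ τ = l τ σ)

include hanti hlsymm in
lemma conv_anticomm (f g : G →₀ A) : conv l f g + conv l g f = 0 := by
  induction f using Finsupp.induction_linear with
  | zero => simp [conv_zero_left, conv_zero_right]
  | add f₁ f₂ h1 h2 =>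
    rw [conv_add_left, conv_add_right,
      show conv l f₁ g + conv l f₂ g + (conv l g f₁ + conv l g f₂)
        = conv l f₁ g + conv l g f₁ + (conv l f₂ g + conv l g f₂) from by abel,
      h1, h2, add_zero]
  | single σ x =>
    induction g using Finsupp.induction_linear with
    | zero => simp [conv_zero_left, conv_zero_right]
    | add g₁ g₂ h1 h2 =>
      rw [conv_add_left, conv_add_right,
        show conv l (Finsupp.single σ x) g₁ + conv l (Finsupp.single σ x) g₂
            + (conv l g₁ (Finsupp.single σ x) + conv l g₂ (Finsupp.single σ x))
          = conv l (Finsupp.single σ x) g₁ + conv l g₁ (Finsupp.single σ x)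
            + (conv l (Finsupp.single σ x) g₂ + conv l g₂ (Finsupp.single σ x)) from by abel,
        h1, h2, add_zero]
    | single τ y =>
      rw [conv_single, conv_single, add_comm τ σ, hlsymm τ σ, hanti y x, smul_neg,
        Finsupp.single_neg, add_neg_cancel]

include hsymm hlsymm in
lemma CT_anticomm (f g : G →₀ A) : centralTerm l B f g + centralTerm l B g f = 0 := by
  induction f using Finsupp.induction_linear with
  | zero => simp [CT_zero_left, CT_zero_right]
  | add f₁ f₂ h1 h2 =>
    rw [CT_add_left, CT_add_right,
      show centralTerm l B f₁ g + centralTerm l B f₂ g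
          + (centralTerm l B g f₁ + centralTerm l B g f₂)
        = centralTerm l B f₁ g + centralTerm l B g f₁
          + (centralTerm l B f₂ g + centralTerm l B g f₂) from by abel,
      h1, h2, add_zero]
  | single σ x =>
    induction g using Finsupp.induction_linear with
    | zero => simp [CT_zero_left, CT_zero_right]
    | add g₁ g₂ h1 h2 =>
      rw [CT_add_left, CT_add_right,
        show centralTerm l B (Finsupp.single σ x) g₁ + centralTerm l B (Finsupp.single σ x) g₂
            + (centralTerm l B g₁ (Finsupp.single σ x) + centralTerm l B g₂ (Finsupp.single σ x))
          = centralTerm l B (Finsupp.single σ x) g₁ + centralTerm l B g₁ (Finsupp.single σ x)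
            + (centralTerm l B (Finsupp.single σ x) g₂ + centralTerm l B g₂ (Finsupp.single σ x))
          from by abel,
        h1, h2, add_zero]
    | single τ y =>
      rw [CT_single, CT_single]
      by_cases h : σ + τ = 0
      · have hτ : τ = -σ := (neg_eq_of_add_eq_zero_right h).symm
        subst hτ
        rw [if_pos h, if_pos (by rw [neg_add_cancel]), hlsymm (-σ) σ, hsymm y x,
          TensorProduct.tmul_neg, smul_neg, add_neg_cancel]
      · rw [if_neg h, if_neg (fun hh => h (by rw [add_comm]; exact hh)), add_zero]
end Anti


section Jac
variable [SMulCommClass F A A] [IsScalarTower F A A]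
variable (hanti : ∀ x y : A, x * y = -(y * x))
  (hsymm : ∀ x y : A, B x y = B y x)
  (hinv : ∀ x y z : A, B (x * y) z = B x (y * z))
  (hlsymm : ∀ σ τ : G, l σ τ = l τ σ)
  (hlcoc : ∀ σ τ ρ : G, l σ τ * l (σ + τ) ρ = l τ ρ * l σ (τ + ρ))
  (hLie : ∀ x y z : A, (x * y) * z + (z * x) * y + (y * z) * x = 0)

lemma dAct_comm (c : (F ⊗[ℤ] G) →ₗ[F] F) (g : G →₀ A) :
    dAct d (dAct c g) = dAct c (dAct d g) := by
  induction g using Finsupp.induction_linear with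
  | zero => simp [dAct_zero]
  | add g₁ g₂ h1 h2 => rw [dAct_add, dAct_add, h1, h2, ← dAct_add, ← dAct_add]
  | single σ y =>
    simp only [dAct_single, smul_smul]
    rw [mul_comm]

include hlsymm hlcoc hLie in
lemma J1 (f g h : G →₀ A) :
    conv l (conv l f g) h + conv l (conv l h f) g + conv l (conv l g h) f = 0 := by
  induction f using Finsupp.induction_linear with
  | zero => simp [conv_zero_left, conv_zero_right]
  | add f₁ f₂ h1 h2 =>
    simp only [conv_add_left, conv_add_right]
    trans (conv l (conv l f₁ g) h + conv l (conv l h f₁) g + conv l (conv l g h) f₁)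
      + (conv l (conv l f₂ g) h + conv l (conv l h f₂) g + conv l (conv l g h) f₂)
    · abel
    · rw [h1, h2, add_zero]
  | single α x =>
    induction g using Finsupp.induction_linear with
    | zero => simp [conv_zero_left, conv_zero_right]
    | add g₁ g₂ h1 h2 =>
      simp only [conv_add_left, conv_add_right]
      trans (conv l (conv l (Finsupp.single α x) g₁) h
          + conv l (conv l h (Finsupp.single α x)) g₁ + conv l (conv l g₁ h) (Finsupp.single α x))
        + (conv l (conv l (Finsupp.single α x) g₂) h
          + conv l (conv l h (Finsupp.single α x)) g₂ + conv l (conv l g₂ h) (Finsupp.single α x))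
      · abel
      · rw [h1, h2, add_zero]
    | single β y =>
      induction h using Finsupp.induction_linear with
      | zero => simp [conv_zero_left, conv_zero_right]
      | add h₁ h₂ k1 k2 =>
        simp only [conv_add_left, conv_add_right]
        trans (conv l (conv l (Finsupp.single α x) (Finsupp.single β y)) h₁
            + conv l (conv l h₁ (Finsupp.single α x)) (Finsupp.single β y)
            + conv l (conv l (Finsupp.single β y) h₁) (Finsupp.single α x))
          + (conv l (conv l (Finsupp.single α x) (Finsupp.single β y)) h₂
            + conv l (conv l h₂ (Finsupp.single α x)) (Finsupp.single β y)
            + conv l (conv l (Finsupp.single β y) h₂) (Finsupp.single α x))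
        · abel
        · rw [k1, k2, add_zero]
      | single γ z =>
        simp only [conv_single, smul_mul_assoc, smul_smul]
        rw [show γ + α + β = α + β + γ from by abel,
          show β + γ + α = α + β + γ from by abel,
          show l (γ + α) β * l γ α = l (α + β) γ * l α β from by
            rw [mul_comm (l (γ + α) β) (l γ α), hlcoc γ α β, hlsymm γ (α + β),
              mul_comm (l α β) (l (α + β) γ)],
          show l (β + γ) α * l β γ = l (α + β) γ * l α β from by
            rw [mul_comm (l (β + γ) α) (l β γ), hlsymm (β + γ) α, ← hlcoc α β γ,
              mul_comm (l α β) (l (α + β) γ)],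
          ← Finsupp.single_add, ← Finsupp.single_add, ← smul_add, ← smul_add,
          hLie x y z, smul_zero, Finsupp.single_zero]

include hanti hlsymm in
lemma J2 (g h : G →₀ A) :
    conv l (dAct d g) h - conv l (dAct d h) g - dAct d (conv l g h) = 0 := by
  induction g using Finsupp.induction_linear with
  | zero => simp [conv_zero_left, conv_zero_right, dAct_zero]
  | add g₁ g₂ h1 h2 =>
    simp only [conv_add_left, conv_add_right, dAct_add]
    trans (conv l (dAct d g₁) h - conv l (dAct d h) g₁ - dAct d (conv l g₁ h))
      + (conv l (dAct d g₂) h - conv l (dAct d h) g₂ - dAct d (conv l g₂ h))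
    · abel
    · rw [h1, h2, add_zero]
  | single β y =>
    induction h using Finsupp.induction_linear with
    | zero => simp [conv_zero_left, conv_zero_right, dAct_zero]
    | add h₁ h₂ k1 k2 =>
      simp only [conv_add_left, conv_add_right, dAct_add]
      trans (conv l (dAct d (Finsupp.single β y)) h₁ - conv l (dAct d h₁) (Finsupp.single β y)
          - dAct d (conv l (Finsupp.single β y) h₁))
        + (conv l (dAct d (Finsupp.single β y)) h₂ - conv l (dAct d h₂) (Finsupp.single β y)
          - dAct d (conv l (Finsupp.single β y) h₂))
      · abel
      · rw [k1, k2, add_zero]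
    | single γ z =>
      simp only [dAct_single, conv_single, smul_mul_assoc, TensorProduct.tmul_add, map_add]
      rw [hanti z y, hlsymm γ β, add_comm γ β, ← Finsupp.single_sub, ← Finsupp.single_sub,
        Finsupp.single_eq_zero]
      module

include hsymm hlsymm in
lemma J5 (g h : G →₀ A) :
    centralTerm l B (dAct d g) h - centralTerm l B (dAct d h) g = 0 := by
  induction g using Finsupp.induction_linear with
  | zero => simp [CT_zero_left, CT_zero_right, dAct_zero]
  | add g₁ g₂ h1 h2 =>
    simp only [CT_add_left, CT_add_right, dAct_add]
    trans (centralTerm l B (dAct d g₁) h - centralTerm l B (dAct d h) g₁)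
      + (centralTerm l B (dAct d g₂) h - centralTerm l B (dAct d h) g₂)
    · abel
    · rw [h1, h2, add_zero]
  | single β y =>
    induction h using Finsupp.induction_linear with
    | zero => simp [CT_zero_left, CT_zero_right, dAct_zero]
    | add h₁ h₂ k1 k2 =>
      simp only [CT_add_left, CT_add_right, dAct_add]
      trans (centralTerm l B (dAct d (Finsupp.single β y)) h₁
          - centralTerm l B (dAct d h₁) (Finsupp.single β y))
        + (centralTerm l B (dAct d (Finsupp.single β y)) h₂
          - centralTerm l B (dAct d h₂) (Finsupp.single β y))
      · abel
      · rw [k1, k2, add_zero]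
    | single γ z =>
      simp only [dAct_single, CT_single]
      by_cases hc : β + γ = 0
      · have hγ : γ = -β := (neg_eq_of_add_eq_zero_right hc).symm
        subst hγ
        rw [if_pos hc, if_pos (by rw [neg_add_cancel])]
        simp only [TensorProduct.tmul_neg, map_neg, map_smul, LinearMap.smul_apply,
          smul_eq_mul, hlsymm (-β) β, hsymm z y]
        module
      · rw [if_neg hc, if_neg (fun hh => hc (by rw [add_comm]; exact hh)), sub_zero]

include hsymm hinv hlsymm hlcoc in
lemma J4 (f g h : G →₀ A) :
    centralTerm l B (conv l f g) h + centralTerm l B (conv l h f) g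
      + centralTerm l B (conv l g h) f = 0 := by
  induction f using Finsupp.induction_linear with
  | zero => simp [CT_zero_left, CT_zero_right, conv_zero_left, conv_zero_right]
  | add f₁ f₂ h1 h2 =>
    simp only [conv_add_left, conv_add_right, CT_add_left, CT_add_right]
    trans (centralTerm l B (conv l f₁ g) h + centralTerm l B (conv l h f₁) g
        + centralTerm l B (conv l g h) f₁)
      + (centralTerm l B (conv l f₂ g) h + centralTerm l B (conv l h f₂) g
        + centralTerm l B (conv l g h) f₂)
    · abel
    · rw [h1, h2, add_zero]
  | single α x =>
    induction g using Finsupp.induction_linear with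
    | zero => simp [CT_zero_left, CT_zero_right, conv_zero_left, conv_zero_right]
    | add g₁ g₂ h1 h2 =>
      simp only [conv_add_left, conv_add_right, CT_add_left, CT_add_right]
      trans (centralTerm l B (conv l (Finsupp.single α x) g₁) h
          + centralTerm l B (conv l h (Finsupp.single α x)) g₁
          + centralTerm l B (conv l g₁ h) (Finsupp.single α x))
        + (centralTerm l B (conv l (Finsupp.single α x) g₂) h
          + centralTerm l B (conv l h (Finsupp.single α x)) g₂
          + centralTerm l B (conv l g₂ h) (Finsupp.single α x))
      · abel
      · rw [h1, h2, add_zero]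
    | single β y =>
      induction h using Finsupp.induction_linear with
      | zero => simp [CT_zero_left, CT_zero_right, conv_zero_left, conv_zero_right]
      | add h₁ h₂ k1 k2 =>
        simp only [conv_add_left, conv_add_right, CT_add_left, CT_add_right]
        trans (centralTerm l B (conv l (Finsupp.single α x) (Finsupp.single β y)) h₁
            + centralTerm l B (conv l h₁ (Finsupp.single α x)) (Finsupp.single β y)
            + centralTerm l B (conv l (Finsupp.single β y) h₁) (Finsupp.single α x))
          + (centralTerm l B (conv l (Finsupp.single α x) (Finsupp.single β y)) h₂
            + centralTerm l B (conv l h₂ (Finsupp.single α x)) (Finsupp.single β y)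
            + centralTerm l B (conv l (Finsupp.single β y) h₂) (Finsupp.single α x))
        · abel
        · rw [k1, k2, add_zero]
      | single γ z =>
        simp only [conv_single, CT_single, map_smul, LinearMap.smul_apply, smul_eq_mul]
        by_cases hc : α + β + γ = 0
        · rw [if_pos hc, if_pos (show γ + α + β = 0 from by
              rw [show γ + α + β = α + β + γ from by abel]; exact hc),
            if_pos (show β + γ + α = 0 from by
              rw [show β + γ + α = α + β + γ from by abel]; exact hc)]
          rw [hinv z x y, ← hsymm (x * y) z, hsymm (y * z) x, hinv x y z]
          rw [← mul_assoc, ← mul_assoc, ← mul_assoc,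
            show l (γ + α) β * l γ α = l (α + β) γ * l α β from by
              rw [mul_comm (l (γ + α) β) (l γ α), hlcoc γ α β, hlsymm γ (α + β),
                mul_comm (l α β) (l (α + β) γ)],
            show l (β + γ) α * l β γ = l (α + β) γ * l α β from by
              rw [mul_comm (l (β + γ) α) (l β γ), hlsymm (β + γ) α, ← hlcoc α β γ,
                mul_comm (l α β) (l (α + β) γ)],
            ← smul_add, ← smul_add, ← TensorProduct.tmul_add, ← TensorProduct.tmul_add,
            show α + β + (γ + α) + (β + γ) = 0 from by
              rw [show α + β + (γ + α) + (β + γ) = (α + β + γ) + (α + β + γ) from by abel,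
                hc, add_zero],
            TensorProduct.tmul_zero, smul_zero]
        · rw [if_neg hc,
            if_neg (fun hh => hc (by rw [show α + β + γ = γ + α + β from by abel]; exact hh)),
            if_neg (fun hh => hc (by rw [show α + β + γ = β + γ + α from by abel]; exact hh))]
          simp

end Jac


section Main
variable [SMulCommClass F A A] [IsScalarTower F A A]
variable (hanti : ∀ x y : A, x * y = -(y * x))
  (hsymm : ∀ x y : A, B x y = B y x)
  (hinv : ∀ x y z : A, B (x * y) z = B x (y * z))
  (hlsymm : ∀ σ τ : G, l σ τ = l τ σ)
  (hlcoc : ∀ σ τ ρ : G, l σ τ * l (σ + τ) ρ = l τ ρ * l σ (τ + ρ))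
  (hLie : ∀ x y z : A, (x * y) * z + (z * x) * y + (y * z) * x = 0)

include hanti hsymm hlsymm in
lemma hmul_anticomm (X Y : (G →₀ A) × (F ⊗[ℤ] G) × ((F ⊗[ℤ] G) →ₗ[F] F)) :
    hmul l B X Y = -(hmul l B Y X) := by
  obtain ⟨f, v, d⟩ := X
  obtain ⟨g, w, e⟩ := Y
  have h1 : conv l f g = -(conv l g f) :=
    eq_neg_of_add_eq_zero_left (conv_anticomm hanti hlsymm f g)
  have h2 : centralTerm l B f g = -(centralTerm l B g f) :=
    eq_neg_of_add_eq_zero_left (CT_anticomm hsymm hlsymm f g)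
  unfold hmul
  simp only [Prod.neg_mk, Prod.mk.injEq]
  refine ⟨?_, ?_, by simp⟩
  · rw [h1]; abel
  · exact h2

lemma hmul_zero_left (X : (G →₀ A) × (F ⊗[ℤ] G) × ((F ⊗[ℤ] G) →ₗ[F] F)) :
    hmul l B 0 X = 0 := by
  unfold hmul
  simp [conv_zero_left, dAct_zero, dAct_zero_fun, CT_zero_left]

include hanti hsymm hinv hlsymm hlcoc hLie in
lemma hjac_zero (X Y Z : (G →₀ A) × (F ⊗[ℤ] G) × ((F ⊗[ℤ] G) →ₗ[F] F)) :
    hjac l B X Y Z = 0 := by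
  obtain ⟨f, v, d⟩ := X
  obtain ⟨g, w, e⟩ := Y
  obtain ⟨h, u, c⟩ := Z
  unfold hjac hmul
  simp only [Prod.mk_add_mk, Prod.mk_eq_zero]
  refine ⟨?_, ?_, by simp⟩
  · simp only [conv_add_left, conv_sub_left, dAct_add, dAct_sub, dAct_zero_fun,
      add_zero, sub_zero, zero_sub, zero_add]
    rw [dAct_comm d c g, dAct_comm e c f, dAct_comm d e h]
    trans (conv l (conv l f g) h + conv l (conv l h f) g + conv l (conv l g h) f)
      + (conv l (dAct d g) h - conv l (dAct d h) g - dAct d (conv l g h))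
      + (conv l (dAct e h) f - conv l (dAct e f) h - dAct e (conv l h f))
      + (conv l (dAct c f) g - conv l (dAct c g) f - dAct c (conv l f g))
    · abel
    · rw [J1 hlsymm hlcoc hLie f g h, J2 d hanti hlsymm g h, J2 e hanti hlsymm h f,
        J2 c hanti hlsymm f g]
      simp
  · simp only [CT_add_left, CT_sub_left]
    trans (centralTerm l B (conv l f g) h + centralTerm l B (conv l h f) g
        + centralTerm l B (conv l g h) f)
      + (centralTerm l B (dAct d g) h - centralTerm l B (dAct d h) g)
      + (centralTerm l B (dAct e h) f - centralTerm l B (dAct e f) h)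
      + (centralTerm l B (dAct c f) g - centralTerm l B (dAct c g) f)
    · abel
    · rw [J4 hsymm hinv hlsymm hlcoc f g h, J5 d hsymm hlsymm g h, J5 e hsymm hlsymm h f,
        J5 c hsymm hlsymm f g]
      simp

end Main


section Forward
variable (hl : ∀ σ τ : G, l σ τ ≠ 0) (hl0 : l 0 0 = 1)
  (hlsymm : ∀ σ τ : G, l σ τ = l τ σ)
  (hlcoc : ∀ σ τ ρ : G, l σ τ * l (σ + τ) ρ = l τ ρ * l σ (τ + ρ))

include hl hl0 hlcoc in
lemma l_right_zero (σ : G) : l σ 0 = 1 := by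
  have h := hlcoc σ 0 0
  rw [add_zero, add_zero, hl0, one_mul] at h
  exact mul_right_cancel₀ (hl σ 0) (h.trans (one_mul _).symm)

include hl hl0 hlsymm hlcoc in
lemma l_left_zero (σ : G) : l 0 σ = 1 := by
  rw [hlsymm 0 σ]; exact l_right_zero hl hl0 hlcoc σ

include hl hl0 hlsymm hlcoc in
lemma malcev_forces_lie [CharZero F] [SMulCommClass F A A] [IsScalarTower F A A]
    (hanti : ∀ x y : A, x * y = -(y * x))
    (hM : ∀ X Y Z : (G →₀ A) × (F ⊗[ℤ] G) × ((F ⊗[ℤ] G) →ₗ[F] F),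
      hjac l B X Y (hmul l B X Z) = hmul l B (hjac l B X Y Z) X)
    (σ : G) (hσ : σ ≠ 0) (d : (F ⊗[ℤ] G) →ₗ[F] F) (hd : d ((1 : F) ⊗ₜ[ℤ] σ) = 1)
    (x y z : A) : (x * y) * z + (z * x) * y + (y * z) * x = 0 := by
  have lz1 : ∀ τ : G, l τ 0 = 1 := l_right_zero hl hl0 hlcoc
  have lz2 : ∀ τ : G, l 0 τ = 1 := l_left_zero hl hl0 hlsymm hlcoc
  have hσ' : ¬ (0 : G) = σ := fun h => hσ h.symm
  have h1 := congrArg (fun t => t.1 σ) (hM (Finsupp.single (0 : G) x, 0, d)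
    (Finsupp.single (0 : G) y, 0, 0) (Finsupp.single σ z, 0, 0))
  simp only [hjac, hmul, conv_single, conv_add_left, conv_add_right, conv_sub_left,
    conv_sub_right, conv_zero_left, conv_zero_right, dAct_single, dAct_add, dAct_sub,
    dAct_zero, dAct_zero_fun, CT_single, CT_add_left, CT_add_right, CT_sub_left, CT_sub_right,
    CT_zero_left, CT_zero_right, lz1, lz2, hl0, hd, TensorProduct.tmul_zero, map_zero,
    zero_smul, one_smul, LinearMap.zero_apply, smul_zero, Finsupp.single_zero, add_zero, zero_add, sub_zero,
    zero_sub, mul_add, add_mul, zero_mul, mul_zero, Prod.fst_add, Prod.snd_add,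
    Finsupp.add_apply, Finsupp.sub_apply, Finsupp.neg_apply, Finsupp.single_apply,
    if_true, if_neg hσ, if_neg hσ'] at h1
  have h2 := congrArg (fun t => t.1 σ) (hM (Finsupp.single (0 : G) x, 0, 0)
    (Finsupp.single (0 : G) y, 0, 0) (Finsupp.single σ z, 0, 0))
  simp only [hjac, hmul, conv_single, conv_add_left, conv_add_right, conv_sub_left,
    conv_sub_right, conv_zero_left, conv_zero_right, dAct_single, dAct_add, dAct_sub,
    dAct_zero, dAct_zero_fun, CT_single, CT_add_left, CT_add_right, CT_sub_left, CT_sub_right,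
    CT_zero_left, CT_zero_right, lz1, lz2, hl0, hd, TensorProduct.tmul_zero, map_zero,
    zero_smul, one_smul, LinearMap.zero_apply, smul_zero, Finsupp.single_zero, add_zero, zero_add, sub_zero,
    zero_sub, mul_add, add_mul, zero_mul, mul_zero, Prod.fst_add, Prod.snd_add,
    Finsupp.add_apply, Finsupp.sub_apply, Finsupp.neg_apply, Finsupp.single_apply,
    if_true, if_neg hσ, if_neg hσ'] at h2
  have d1 := sub_eq_zero_of_eq h1
  have d2 := sub_eq_zero_of_eq h2
  have key := congrArg₂ (fun u v : A => u - v) d1 d2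
  simp only [sub_zero] at key
  simp only [hanti z y, hanti (x*z) y, neg_mul, mul_neg, neg_neg, sub_neg_eq_add] at key
  have twoJ : (2:F) • (x * y * z + z * x * y + y * z * x) = 0 := by
    rw [← key]
    module
  calc x * y * z + z * x * y + y * z * x
      = (2:F)⁻¹ • ((2:F) • (x * y * z + z * x * y + y * z * x)) := by
        rw [smul_smul, inv_mul_cancel₀ (two_ne_zero), one_smul]
    _ = 0 := by rw [twoJ, smul_zero]

end Forward

end

lemma exists_deriv {F G : Type*} [Field F] [CharZero F] [AddCommGroup G]
    [NoZeroSMulDivisors ℤ G] (σ : G) (hσ : σ ≠ 0) :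
    ∃ d : (F ⊗[ℤ] G) →ₗ[F] F, d ((1 : F) ⊗ₜ[ℤ] σ) = 1 := by
  obtain ⟨χ, hχ⟩ := (Module.Baer.of_divisible F).extension_property
    (LinearMap.toSpanSingleton ℤ G σ)
    (fun a b hab => by
      simpa using smul_left_injective ℤ hσ (by simpa [LinearMap.toSpanSingleton_apply] using hab))
    (LinearMap.toSpanSingleton ℤ F 1)
  have hχσ : χ σ = 1 := by
    have := LinearMap.congr_fun hχ 1
    simpa [LinearMap.toSpanSingleton_apply] using this
  refine ⟨TensorProduct.AlgebraTensorModule.lift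
    (LinearMap.toSpanSingleton F (G →ₗ[ℤ] F) χ), ?_⟩
  simp [TensorProduct.AlgebraTensorModule.lift_apply, LinearMap.toSpanSingleton_apply, hχσ]

/-- For an anticommutative algebra `A` with a symmetric invariant form,
a torsion-free abelian group `G` with nontrivial elements and a symmetric 2-cocycle `λ`,
the full extension `L̂(A) = (A ⊗ F^t[G]) ⊕ V ⊕ V*` is a Malcev algebra if and only if
`A` is a Lie algebra (`J(x,y,z) = 0` for all `x,y,z`), in which case `L̂(A)` is a Lie
algebra. -/
theorem full_extension_malcev_iff_lie {F G A : Type*} [Field F] [CharZero F]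
    [AddCommGroup G] [DecidableEq G] [NoZeroSMulDivisors ℤ G]
    (hGne : ∃ σ : G, σ ≠ 0)
    [NonUnitalNonAssocRing A] [Module F A] [SMulCommClass F A A] [IsScalarTower F A A]
    (hanti : ∀ x y : A, x * y = -(y * x))
    (B : A →ₗ[F] A →ₗ[F] F)
    (hsymm : ∀ x y : A, B x y = B y x)
    (hinv : ∀ x y z : A, B (x * y) z = B x (y * z))
    (l : G → G → F) (hl : ∀ σ τ : G, l σ τ ≠ 0) (hl0 : l 0 0 = 1)
    (hlsymm : ∀ σ τ : G, l σ τ = l τ σ)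
    (hlcoc : ∀ σ τ ρ : G, l σ τ * l (σ + τ) ρ = l τ ρ * l σ (τ + ρ)) :
    (((∀ X Y : (G →₀ A) × (F ⊗[ℤ] G) × ((F ⊗[ℤ] G) →ₗ[F] F),
          hmul l B X Y = -(hmul l B Y X)) ∧
        (∀ X Y Z : (G →₀ A) × (F ⊗[ℤ] G) × ((F ⊗[ℤ] G) →ₗ[F] F),
          hjac l B X Y (hmul l B X Z) = hmul l B (hjac l B X Y Z) X)) ↔
      (∀ x y z : A, jac x y z = 0)) ∧
    ((∀ x y z : A, jac x y z = 0) →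
      ∀ X Y Z : (G →₀ A) × (F ⊗[ℤ] G) × ((F ⊗[ℤ] G) →ₗ[F] F),
        hjac l B X Y Z = 0) := by
  have hLie_of : (∀ x y z : A, jac x y z = 0) →
      ∀ x y z : A, (x * y) * z + (z * x) * y + (y * z) * x = 0 := by
    intro hLie x y z; simpa [jac] using hLie x y z
  constructor
  · constructor
    · rintro ⟨-, hM⟩ x y z
      obtain ⟨σ, hσ⟩ := hGne
      obtain ⟨d, hd⟩ := exists_deriv (F := F) σ hσ
      have := malcev_forces_lie hl hl0 hlsymm hlcoc hanti hM σ hσ d hd x y z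
      simpa [jac] using this
    · intro hLie
      have hLie' := hLie_of hLie
      refine ⟨hmul_anticomm hanti hsymm hlsymm, fun X Y Z => ?_⟩
      rw [hjac_zero hanti hsymm hinv hlsymm hlcoc hLie' X Y (hmul l B X Z),
        hjac_zero hanti hsymm hinv hlsymm hlcoc hLie' X Y Z, hmul_zero_left]
  · intro hLie X Y Z
    exact hjac_zero hanti hsymm hinv hlsymm hlcoc (hLie_of hLie) X Y Z
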